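/- Let K₃(t,r) = (4πt)^(−3/2) e^(−r²/(4t) − t) · r/sinh r and Z(r) = coth r − 1/r. Then for all t > 0 and r ≥ 0, |∂ᵣ log K₃(t,r)| = √(∂ₜ log K₃(t,r) + 3/(2t) + 1) + Z(2t√(∂ₜ log K₃(t,r) + 3/(2t) + 1)). -/

import Mathlib

open Real

noncomputable def Z : ℝ → ℝ := fun r => Real.cosh r / Real.sinh r - 1 / r

/-- The heat kernel of the 3-dimensional hyperbolic space (with the factor
`r / sinh r` extended continuously by `1` at `r = 0`). -/
noncomputable def K3 : ℝ → ℝ → ℝ := fun t r =>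
  (4 * π * t) ^ (-(3 : ℝ) / 2) * Real.exp (-r ^ 2 / (4 * t) - t) *
    (if r = 0 then 1 else r / Real.sinh r)

lemma even_deriv_zero (f : ℝ → ℝ) (hf : ∀ x, f (-x) = f x) : deriv f 0 = 0 := by
  by_cases h : DifferentiableAt ℝ f 0
  · have h1 : HasDerivAt f (deriv f 0) 0 := h.hasDerivAt
    have h1' : HasDerivAt f (deriv f 0) (-(0:ℝ)) := by simpa using h1
    have h2 : HasDerivAt (fun x => f (-x)) (deriv f 0 * (-1)) 0 := by
      simpa [Function.comp_def] using h1'.comp 0 ((hasDerivAt_id (0:ℝ)).neg)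
    have h3 : HasDerivAt f (deriv f 0 * (-1)) 0 := by
      simpa only [hf] using h2
    have := h1.unique h3
    linarith
  · exact deriv_zero_of_not_differentiableAt h

lemma sinh_le_mul_cosh {r : ℝ} (hr : 0 ≤ r) : Real.sinh r ≤ r * Real.cosh r := by
  have hmono : MonotoneOn (fun x => x * Real.cosh x - Real.sinh x) (Set.Ici 0) := by
    apply monotoneOn_of_deriv_nonneg (convex_Ici 0)
    · fun_prop
    · intro x hx
      exact ((hasDerivAt_id x).mul (Real.hasDerivAt_cosh x)).sub
        (Real.hasDerivAt_sinh x) |>.differentiableAt.differentiableWithinAt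
    · intro x hx
      simp only [interior_Ici, Set.mem_Ioi] at hx
      have hd : deriv (fun x => x * Real.cosh x - Real.sinh x) x = x * Real.sinh x := by
        have := ((hasDerivAt_id x).mul (Real.hasDerivAt_cosh x)).sub (Real.hasDerivAt_sinh x)
        simpa [mul_comm] using this.deriv
      rw [hd]
      positivity
  have := hmono (Set.self_mem_Ici) (Set.mem_Ici.mpr hr) hr
  simp at this
  linarith

-- derivative in r, for r > 0
lemma deriv_r (t : ℝ) (ht : 0 < t) (r : ℝ) (hr : 0 < r) :
    deriv (fun s => Real.log (K3 t s)) r = -(r / (2 * t)) - Z r := by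
  have hA : 0 < (4 * π * t) ^ (-(3 : ℝ) / 2) :=
    Real.rpow_pos_of_pos (by have := Real.pi_pos; positivity) _
  have heq : (fun s => Real.log (K3 t s)) =ᶠ[nhds r]
      (fun s => Real.log ((4 * π * t) ^ (-(3 : ℝ) / 2)) + (-s ^ 2 / (4 * t) - t)
        + Real.log s - Real.log (Real.sinh s)) := by
    filter_upwards [eventually_gt_nhds hr] with s hs
    have hsinh : 0 < Real.sinh s := Real.sinh_pos_iff.mpr hs
    rw [K3]
    simp only [if_neg hs.ne']
    rw [Real.log_mul (by positivity) (by positivity), Real.log_mul (by positivity)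
      (Real.exp_ne_zero _), Real.log_exp, Real.log_div hs.ne' hsinh.ne']
    ring
  rw [heq.deriv_eq]
  have hsinh : 0 < Real.sinh r := Real.sinh_pos_iff.mpr hr
  have hd : HasDerivAt (fun s : ℝ => Real.log ((4 * π * t) ^ (-(3 : ℝ) / 2))
      + (-s ^ 2 / (4 * t) - t) + Real.log s - Real.log (Real.sinh s))
      (0 + -(2 * r) / (4 * t) + 1 / r - Real.cosh r / Real.sinh r) r := by
    have h1 : HasDerivAt (fun s : ℝ => -s ^ 2 / (4 * t) - t) (-(2 * r) / (4 * t)) r := by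
      have h : HasDerivAt (fun s : ℝ => -s ^ 2) (-(2 * r)) r := by
        simpa [Pi.neg_def] using ((hasDerivAt_pow 2 r).neg)
      exact (h.div_const _).sub_const t
    have h2 : HasDerivAt (fun s : ℝ => Real.log s) (1 / r) r := by
      simpa [one_div] using Real.hasDerivAt_log hr.ne'
    have h3 : HasDerivAt (fun s : ℝ => Real.log (Real.sinh s))
        (Real.cosh r / Real.sinh r) r := by
      have := (Real.hasDerivAt_log hsinh.ne').comp r (Real.hasDerivAt_sinh r)
      simpa [div_eq_inv_mul, Function.comp_def] using this
    exact (((hasDerivAt_const r _).add h1).add h2).sub h3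
  rw [hd.deriv, Z]
  field_simp
  ring
-- derivative in t
lemma deriv_t (t : ℝ) (ht : 0 < t) (r : ℝ) :
    deriv (fun s => Real.log (K3 s r)) t = -(3 / (2 * t)) + r ^ 2 / (4 * t ^ 2) - 1 := by
  have hπ : (0:ℝ) < π := Real.pi_pos
  have heq : (fun s => Real.log (K3 s r)) =ᶠ[nhds t]
      (fun s => (-(3 : ℝ) / 2) * Real.log (4 * π * s) + (-r ^ 2 / (4 * s) - s)
        + Real.log (if r = 0 then 1 else r / Real.sinh r)) := by
    filter_upwards [eventually_gt_nhds ht] with s hs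
    have h4 : (0:ℝ) < 4 * π * s := by positivity
    rw [K3]
    have hifne : (if r = 0 then 1 else r / Real.sinh r) ≠ 0 := by
      split_ifs with h
      · norm_num
      · exact div_ne_zero h (Real.sinh_ne_zero.mpr h)
    rw [Real.log_mul (by positivity) hifne, Real.log_mul (by positivity) (Real.exp_ne_zero _),
      Real.log_exp, Real.log_rpow h4]
  rw [heq.deriv_eq]
  have hd : HasDerivAt (fun s : ℝ => (-(3 : ℝ) / 2) * Real.log (4 * π * s)
      + (-r ^ 2 / (4 * s) - s) + Real.log (if r = 0 then 1 else r / Real.sinh r))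
      ((-(3 : ℝ) / 2) * ((4 * π * t)⁻¹ * (4 * π)) + (-(-r ^ 2 * 4) / (4 * t) ^ 2 - 1)) t := by
    have h1 : HasDerivAt (fun s : ℝ => Real.log (4 * π * s)) ((4 * π * t)⁻¹ * (4 * π)) t := by
      have h4 : (4 * π * t) ≠ 0 := by positivity
      have hb : HasDerivAt (fun s : ℝ => 4 * π * s) (4 * π) t := by
        simpa using (hasDerivAt_id t).const_mul (4 * π)
      simpa [Function.comp_def] using (Real.hasDerivAt_log h4).comp t hb
    have h2 : HasDerivAt (fun s : ℝ => -r ^ 2 / (4 * s) - s)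
        (-(-r ^ 2 * 4) / (4 * t) ^ 2 - 1) t := by
      have hne : (4 : ℝ) * t ≠ 0 := by positivity
      have hb : HasDerivAt (fun s : ℝ => (4:ℝ) * s) 4 t := by
        simpa using (hasDerivAt_id t).const_mul (4:ℝ)
      have := (hasDerivAt_const t (-r ^ 2)).div hb hne
      simpa [Pi.div_def, Pi.sub_def] using this.sub (hasDerivAt_id t)
    exact ((h1.const_mul _).add h2).add_const _
  rw [hd.deriv]
  field_simp
  ring

theorem stmt_13 (t : ℝ) (ht : 0 < t) (r : ℝ) (hr : 0 ≤ r) :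
    |deriv (fun s => Real.log (K3 t s)) r|
      = Real.sqrt (deriv (fun s => Real.log (K3 s r)) t + 3 / (2 * t) + 1)
        + Z (2 * t * Real.sqrt (deriv (fun s => Real.log (K3 s r)) t + 3 / (2 * t) + 1)) := by
  have hdt : deriv (fun s => Real.log (K3 s r)) t + 3 / (2 * t) + 1 = (r / (2 * t)) ^ 2 := by
    rw [deriv_t t ht r]
    field_simp
    ring
  have hsq : Real.sqrt (deriv (fun s => Real.log (K3 s r)) t + 3 / (2 * t) + 1) = r / (2 * t) := by
    rw [hdt, Real.sqrt_sq (by positivity)]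
  rw [hsq]
  have h2t : 2 * t * (r / (2 * t)) = r := by field_simp
  rw [h2t]
  rcases hr.eq_or_lt with h0 | hrpos
  · subst h0
    have hL : deriv (fun s => Real.log (K3 t s)) 0 = 0 := by
      apply even_deriv_zero
      intro x
      simp [K3, Real.sinh_neg, neg_eq_zero, neg_div_neg_eq]
    rw [hL, Z]
    simp
  · rw [deriv_r t ht r hrpos]
    have hZ : 0 ≤ Z r := by
      rw [Z]
      have hsinh : 0 < Real.sinh r := Real.sinh_pos_iff.mpr hrpos
      rw [sub_nonneg, div_le_div_iff₀ hrpos hsinh]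
      simpa [mul_comm] using sinh_le_mul_cosh hrpos.le
    have : 0 ≤ r / (2 * t) := by positivity
    rw [abs_of_nonpos (by linarith)]
    ring
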